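/- arXiv:0906.4387 — 3 statements merged into one kernel-verified Lean document; each statement's English description precedes it below -/
import Mathlib

section
/- Entropy Balog–Szemerédi–Gowers lemma: let X, Y be G-valued random variables with H(X,Y) ≥ H(X)+H(Y)−log K and H(X+Y) ≤ H(X)/2+H(Y)/2+log K. Construct X_1,X_2 as conditionally independent trials of X given Y, and then Y' so that (X_1,X_2,Y) and (X_1,Y') are conditionally independent given X_1 with (X_1,Y') a copy of (X_1,Y). Then X_2 and Y' are conditionally independent given (X_1,Y), H(X_2|X_1,Y) ≥ H(X)−log K, H(Y'|X_1,Y) ≥ H(Y)−log K, and H(X_2+Y' | X_1,Y) ≤ H(X)/2 + H(Y)/2 + 7 log K. -/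
open Real
open scoped BigOperators Pointwise Classical

/-- A finitely supported probability space. -/
structure FinProb (Ω : Type*) [Fintype Ω] where
  p : Ω → ℝ
  nonneg : ∀ ω, 0 ≤ p ω
  sum_one : ∑ ω, p ω = 1

/-- Probability that the random variable `X` takes the value `s`. -/
noncomputable def prob {Ω S : Type*} [Fintype Ω] (μ : FinProb Ω) (X : Ω → S) (s : S) : ℝ :=
  ∑ ω, if X ω = s then μ.p ω else 0

/-- Shannon entropy of a discrete random variable. -/
noncomputable def entropy {Ω S : Type*} [Fintype Ω] (μ : FinProb Ω) (X : Ω → S) : ℝ :=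
  ∑ s ∈ Finset.univ.image X, Real.negMulLog (prob μ X s)

/-- Conditional Shannon entropy `H(X|Y) = H(X,Y) - H(Y)`. -/
noncomputable def condEntropy {Ω S T : Type*} [Fintype Ω] (μ : FinProb Ω)
    (X : Ω → S) (Y : Ω → T) : ℝ :=
  entropy μ (fun ω => (X ω, Y ω)) - entropy μ Y

/-- The essential range of a random variable: values attained with positive probability. -/
noncomputable def rangeF {Ω S : Type*} [Fintype Ω] (μ : FinProb Ω) (X : Ω → S) : Finset S :=
  (Finset.univ.image X).filter (fun s => prob μ X s ≠ 0)

/-- Two random variables (on possibly different spaces) have the same distribution. -/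
def IdentDist {Ω Ω' S : Type*} [Fintype Ω] [Fintype Ω'] (μ : FinProb Ω) (X : Ω → S)
    (μ' : FinProb Ω') (Y : Ω' → S) : Prop :=
  ∀ s, prob μ X s = prob μ' Y s

/-- Independence of two random variables. -/
def IndepRV {Ω S T : Type*} [Fintype Ω] (μ : FinProb Ω) (X : Ω → S) (Y : Ω → T) : Prop :=
  ∀ s t, prob μ (fun ω => (X ω, Y ω)) (s, t) = prob μ X s * prob μ Y t

/-- Joint independence of a finite family of random variables. -/
def IndepFam {Ω ι : Type*} [Fintype Ω] [Fintype ι] {S : ι → Type*}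
    (μ : FinProb Ω) (X : ∀ i, Ω → S i) : Prop :=
  ∀ f : ∀ i, S i, prob μ (fun ω i => X i ω) f = ∏ i, prob μ (X i) (f i)

/-- `X` and `Y` are conditionally independent given `W`. -/
def CondIndepGiven {Ω S T U : Type*} [Fintype Ω] (μ : FinProb Ω)
    (X : Ω → S) (Y : Ω → T) (W : Ω → U) : Prop :=
  ∀ s t u, prob μ (fun ω => (X ω, Y ω, W ω)) (s, t, u) * prob μ W u
    = prob μ (fun ω => (X ω, W ω)) (s, u) * prob μ (fun ω => (Y ω, W ω)) (t, u)

/-- `Y` is determined by `X` (almost surely). -/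
def Determines {Ω S T : Type*} [Fintype Ω] (μ : FinProb Ω) (X : Ω → S) (Y : Ω → T) : Prop :=
  ∃ f : S → T, ∀ ω, μ.p ω ≠ 0 → Y ω = f (X ω)

/-- The entropy transport distance between the distributions of `X` and `Y`:
the infimum of `H(Z)` over random variables `Z` (coupled with a copy `X'` of `X`)
such that `X' + Z` is distributed as `Y`. -/
noncomputable def transDist {Ω₁ Ω₂ G : Type*} [Fintype Ω₁] [Fintype Ω₂] [AddCommGroup G]
    (μ : FinProb Ω₁) (X : Ω₁ → G) (ν : FinProb Ω₂) (Y : Ω₂ → G) : ℝ :=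
  sInf {h : ℝ | ∃ (n : ℕ) (μ' : FinProb (Fin n)) (X' Z : Fin n → G),
    IdentDist μ' X' μ X ∧ IdentDist μ' (fun ω => X' ω + Z ω) ν Y ∧ entropy μ' Z = h}

/-- Conditioning a finitely supported probability space on an event `E`
(returning `μ` unchanged if `E` has zero probability). -/
noncomputable def condFinProb {Ω : Type*} [Fintype Ω] (μ : FinProb Ω) (E : Ω → Prop) :
    FinProb Ω :=
  if h : 0 < ∑ ω, if E ω then μ.p ω else 0 then
    { p := fun ω => if E ω then μ.p ω / (∑ ω', if E ω' then μ.p ω' else 0) else 0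
      nonneg := fun ω => by
        split
        · exact div_nonneg (μ.nonneg ω) h.le
        · exact le_refl 0
      sum_one := by
        have h' : ∀ ω, (if E ω then μ.p ω / (∑ ω', if E ω' then μ.p ω' else 0) else 0)
            = (if E ω then μ.p ω else 0) / (∑ ω', if E ω' then μ.p ω' else 0) := by
          intro ω; split <;> simp
        rw [Finset.sum_congr rfl (fun ω _ => h' ω), ← Finset.sum_div, div_self h.ne'] }
  else μ


section BSGHelpers

namespace BSG

variable {Ω : Type*} [Fintype Ω]

lemma prob_nonneg (μ : FinProb Ω) {S : Type*} (X : Ω → S) (s : S) : 0 ≤ prob μ X s :=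
  Finset.sum_nonneg fun ω _ => by
    by_cases h : X ω = s
    · simp only [if_pos h]; exact μ.nonneg ω
    · simp only [if_neg h]; exact le_rfl

lemma prob_eq_of_iff (μ : FinProb Ω) {S T : Type*} {U : Ω → S} {V : Ω → T} {u : S} {v : T}
    (h : ∀ ω, U ω = u ↔ V ω = v) : prob μ U u = prob μ V v :=
  Finset.sum_congr rfl fun ω _ => by
    by_cases hω : U ω = u
    · rw [if_pos hω, if_pos ((h ω).1 hω)]
    · rw [if_neg hω, if_neg fun c => hω ((h ω).2 c)]

lemma ite_irrel {P : Prop} {i1 i2 : Decidable P} (x y : ℝ) :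
    @ite ℝ P i1 x y = @ite ℝ P i2 x y := by
  by_cases h : P
  · rw [if_pos h, if_pos h]
  · rw [if_neg h, if_neg h]

lemma sum_ite_eq_of_mem {S : Type*} (A : Finset S) (a : S) (ha : a ∈ A) (f : S → ℝ)
    {inst : ∀ s, Decidable (a = s)} :
    (∑ s ∈ A, @ite ℝ (a = s) (inst s) (f s) 0) = f a := by
  classical
  calc (∑ s ∈ A, @ite ℝ (a = s) (inst s) (f s) 0)
      = ∑ s ∈ A, @ite ℝ (a = s) (Classical.propDecidable _) (f s) 0 :=
        Finset.sum_congr rfl fun s _ => ite_irrel (f s) 0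
    _ = if a ∈ A then f a else 0 := Finset.sum_ite_eq A a f
    _ = f a := if_pos ha

lemma sum_ite_iff {S : Type*} (A : Finset S) (a : S) (ha : a ∈ A) (P : S → Prop) (Q : Prop)
    {instP : DecidablePred P} {instQ : Decidable Q}
    (hPQ : ∀ s, P s ↔ a = s ∧ Q) (x : ℝ) :
    (∑ s ∈ A, @ite ℝ (P s) (instP s) x 0) = @ite ℝ Q instQ x 0 := by
  classical
  have h1 : ∀ s ∈ A, @ite ℝ (P s) (instP s) x 0
      = if a = s then (if Q then x else 0) else 0 := by
    intro s _
    by_cases hp : P s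
    · obtain ⟨h2, h3⟩ := (hPQ s).1 hp
      rw [if_pos hp, if_pos h2, if_pos h3]
    · by_cases h2 : a = s
      · by_cases h3 : Q
        · exact absurd ((hPQ s).2 ⟨h2, h3⟩) hp
        · rw [if_neg hp, if_pos h2, if_neg h3]
      · rw [if_neg hp, if_neg h2]
  calc (∑ s ∈ A, @ite ℝ (P s) (instP s) x 0)
      = ∑ s ∈ A, (if a = s then (if Q then x else 0) else 0) := Finset.sum_congr rfl h1
    _ = (if Q then x else 0) := sum_ite_eq_of_mem A a ha _
    _ = @ite ℝ Q instQ x 0 := ite_irrel x 0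

lemma sum_prob (μ : FinProb Ω) {S : Type*} (X : Ω → S) (A : Finset S) (hA : ∀ ω, X ω ∈ A) :
    ∑ s ∈ A, prob μ X s = 1 := by
  simp only [prob]
  rw [Finset.sum_comm]
  calc ∑ ω, ∑ s ∈ A, (if X ω = s then μ.p ω else 0)
      = ∑ ω, μ.p ω := Finset.sum_congr rfl fun ω _ => by
        rw [sum_ite_eq_of_mem A (X ω) (hA ω) fun _ => μ.p ω]
    _ = 1 := μ.sum_one

lemma prob_not_mem (μ : FinProb Ω) {S : Type*} (X : Ω → S) (s : S)
    (h : s ∉ Finset.univ.image X) : prob μ X s = 0 :=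
  Finset.sum_eq_zero fun ω _ => by
    rw [if_neg]
    intro hx
    exact h (Finset.mem_image.2 ⟨ω, Finset.mem_univ ω, hx⟩)

lemma prob_pair_le_fst (μ : FinProb Ω) {S T : Type*} (F : Ω → S) (G : Ω → T) (s : S) (t : T) :
    prob μ (fun ω => (F ω, G ω)) (s, t) ≤ prob μ F s :=
  Finset.sum_le_sum fun ω _ => by
    by_cases h : (F ω, G ω) = (s, t)
    · rw [if_pos h, if_pos (show F ω = s from congrArg Prod.fst h)]
    · rw [if_neg h]
      by_cases h2 : F ω = s
      · rw [if_pos h2]; exact μ.nonneg ω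
      · rw [if_neg h2]

lemma prob_marg_fst (μ : FinProb Ω) {S T : Type*} (F : Ω → S) (G : Ω → T) (A : Finset S)
    (hA : ∀ ω, F ω ∈ A) (t : T) :
    ∑ s ∈ A, prob μ (fun ω => (F ω, G ω)) (s, t) = prob μ G t := by
  simp only [prob]
  rw [Finset.sum_comm]
  refine Finset.sum_congr rfl fun ω _ => ?_
  exact sum_ite_iff A (F ω) (hA ω) _ (G ω = t) (fun s => by
    constructor
    · intro h; exact ⟨congrArg Prod.fst h, congrArg Prod.snd h⟩
    · rintro ⟨h1, h2⟩; rw [h1, h2]) (μ.p ω)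

lemma prob_comp (μ : FinProb Ω) {S T : Type*} (W : Ω → S) (φ : S → T) (A : Finset S)
    (hA : ∀ ω, W ω ∈ A) (t : T) :
    prob μ (fun ω => φ (W ω)) t = ∑ s ∈ A, if φ s = t then prob μ W s else 0 := by
  simp only [prob]
  have h1 : ∀ s ∈ A, (if φ s = t then ∑ ω, (if W ω = s then μ.p ω else 0) else 0)
      = ∑ ω, (if W ω = s ∧ φ s = t then μ.p ω else 0) := by
    intro s _
    by_cases h : φ s = t
    · rw [if_pos h]
      exact Finset.sum_congr rfl fun ω _ => by
        by_cases h2 : W ω = s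
        · rw [if_pos h2, if_pos ⟨h2, h⟩]
        · rw [if_neg h2, if_neg fun hc => h2 hc.1]
    · rw [if_neg h]
      exact (Finset.sum_eq_zero fun ω _ => by rw [if_neg fun hc => h hc.2]).symm
  rw [Finset.sum_congr rfl h1, Finset.sum_comm]
  refine Finset.sum_congr rfl fun ω _ => ?_
  exact (sum_ite_iff A (W ω) (hA ω) _ (φ (W ω) = t) (fun s => by
    constructor
    · rintro ⟨h1, h2⟩; exact ⟨h1, by rw [h1]; exact h2⟩
    · rintro ⟨h1, h2⟩; exact ⟨h1, by rw [← h1]; exact h2⟩) (μ.p ω)).symm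

lemma ent_eq_sum (μ : FinProb Ω) {S : Type*} (W : Ω → S) (A : Finset S) (hA : ∀ ω, W ω ∈ A) :
    entropy μ W = ∑ s ∈ A, Real.negMulLog (prob μ W s) := by
  simp only [entropy]
  refine Finset.sum_subset (fun s hs => ?_) (fun s _ hs => ?_)
  · obtain ⟨ω, _, rfl⟩ := Finset.mem_image.1 hs
    exact hA ω
  · rw [prob_not_mem μ W s hs, Real.negMulLog_zero]

lemma negMulLog_eq (x : ℝ) : Real.negMulLog x = x * (-Real.log x) := by
  simp only [Real.negMulLog_def]; ring

lemma negMulLog_sum_le {S : Type*} (A : Finset S) (x : S → ℝ) (hx : ∀ s ∈ A, 0 ≤ x s) :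
    Real.negMulLog (∑ s ∈ A, x s) ≤ ∑ s ∈ A, Real.negMulLog (x s) := by
  rw [negMulLog_eq, Finset.sum_mul]
  refine Finset.sum_le_sum fun s hs => ?_
  rw [negMulLog_eq]
  rcases eq_or_lt_of_le (hx s hs) with h0 | h0
  · rw [← h0]; simp
  · have hle : x s ≤ ∑ t ∈ A, x t := Finset.single_le_sum hx hs
    have hlog : Real.log (x s) ≤ Real.log (∑ t ∈ A, x t) := Real.log_le_log h0 hle
    exact mul_le_mul_of_nonneg_left (neg_le_neg hlog) (hx s hs)

lemma ent_comp_le (μ : FinProb Ω) {S T : Type*} (W : Ω → S) (φ : S → T) :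
    entropy μ (fun ω => φ (W ω)) ≤ entropy μ W := by
  classical
  set A := Finset.univ.image W with hAdef
  have hA : ∀ ω, W ω ∈ A := fun ω => Finset.mem_image_of_mem W (Finset.mem_univ ω)
  rw [ent_eq_sum μ W A hA, ent_eq_sum μ (fun ω => φ (W ω)) (A.image φ)
      (fun ω => Finset.mem_image_of_mem φ (hA ω))]
  rw [← Finset.sum_fiberwise_of_maps_to (fun s hs => Finset.mem_image_of_mem φ hs)
      (fun s => Real.negMulLog (prob μ W s))]
  refine Finset.sum_le_sum fun t ht => ?_
  have hprob : prob μ (fun ω => φ (W ω)) t = ∑ s ∈ A with φ s = t, prob μ W s := by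
    rw [prob_comp μ W φ A hA t, Finset.sum_filter]
  rw [hprob]
  exact negMulLog_sum_le _ _ fun s _ => prob_nonneg μ W s

lemma ent_comp_inj (μ : FinProb Ω) {S T : Type*} (W : Ω → S) (φ : S → T)
    (hφ : Function.Injective φ) :
    entropy μ (fun ω => φ (W ω)) = entropy μ W := by
  classical
  set A := Finset.univ.image W with hAdef
  have hA : ∀ ω, W ω ∈ A := fun ω => Finset.mem_image_of_mem W (Finset.mem_univ ω)
  rw [ent_eq_sum μ W A hA, ent_eq_sum μ (fun ω => φ (W ω)) (A.image φ)
      (fun ω => Finset.mem_image_of_mem φ (hA ω)),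
    Finset.sum_image (fun x _ y _ h => hφ h)]
  refine Finset.sum_congr rfl fun s _ => ?_
  have hps : prob μ (fun ω => φ (W ω)) (φ s) = prob μ W s :=
    prob_eq_of_iff μ fun ω => ⟨fun h => hφ h, fun h => by rw [h]⟩
  rw [hps]

lemma ent_reorder (μ : FinProb Ω) {S T : Type*} (W : Ω → S) (V : Ω → T) (φ : S → T)
    (hφ : Function.Injective φ) (h : ∀ ω, V ω = φ (W ω)) : entropy μ V = entropy μ W := by
  have hV : V = fun ω => φ (W ω) := funext h
  rw [hV]
  exact ent_comp_inj μ W φ hφ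

lemma ent_identDist {Ω' : Type*} [Fintype Ω'] (μ : FinProb Ω) (ν : FinProb Ω') {S : Type*}
    (W : Ω → S) (V : Ω' → S) (h : IdentDist μ W ν V) : entropy μ W = entropy ν V := by
  classical
  rw [ent_eq_sum μ W (Finset.univ.image W ∪ Finset.univ.image V)
      (fun ω => Finset.mem_union_left _ (Finset.mem_image_of_mem W (Finset.mem_univ ω))),
    ent_eq_sum ν V (Finset.univ.image W ∪ Finset.univ.image V)
      (fun ω => Finset.mem_union_right _ (Finset.mem_image_of_mem V (Finset.mem_univ ω)))]
  exact Finset.sum_congr rfl fun s _ => by rw [h s]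

lemma identDist_comp {Ω' : Type*} [Fintype Ω'] (μ : FinProb Ω) (ν : FinProb Ω') {S T : Type*}
    (W : Ω → S) (V : Ω' → S) (h : IdentDist μ W ν V) (φ : S → T) :
    IdentDist μ (fun ω => φ (W ω)) ν (fun ω => φ (V ω)) := by
  classical
  intro t
  rw [prob_comp μ W φ (Finset.univ.image W ∪ Finset.univ.image V)
      (fun ω => Finset.mem_union_left _ (Finset.mem_image_of_mem W (Finset.mem_univ ω))) t,
    prob_comp ν V φ (Finset.univ.image W ∪ Finset.univ.image V)
      (fun ω => Finset.mem_union_right _ (Finset.mem_image_of_mem V (Finset.mem_univ ω))) t]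
  exact Finset.sum_congr rfl fun s _ => by rw [h s]

lemma ent_const (μ : FinProb Ω) {T : Type*} (c : T) : entropy μ (fun _ => c) = 0 := by
  rw [ent_eq_sum μ (fun _ => c) {c} (fun _ => Finset.mem_singleton_self c),
    Finset.sum_singleton]
  have h1 : prob μ (fun _ : Ω => c) c = 1 := by
    simp [prob, μ.sum_one]
  rw [h1, Real.negMulLog_one]

end BSG

end BSGHelpers

section BSGGibbs

namespace BSG

lemma gibbs_term (p x y z : ℝ) (hp : 0 ≤ p) (hpx : p ≤ x) (hpy : p ≤ y) (hxz : x ≤ z) :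
    p - (if 0 < z then x * y / z else 0)
      ≤ (p * (-Real.log x) + p * (-Real.log y))
        - (p * (-Real.log p) + p * (-Real.log z)) := by
  rcases eq_or_lt_of_le hp with h0 | hp0
  · have he : 0 ≤ (if 0 < z then x * y / z else 0) := by
      split_ifs with h
      · exact div_nonneg (mul_nonneg (hp.trans hpx) (hp.trans hpy)) h.le
      · exact le_rfl
    rw [← h0]
    simp only [zero_mul, zero_sub, add_zero, zero_add, neg_zero, sub_zero]
    linarith
  · have hx := lt_of_lt_of_le hp0 hpx
    have hy := lt_of_lt_of_le hp0 hpy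
    have hz := lt_of_lt_of_le hx hxz
    rw [if_pos hz]
    have ht : 0 < x * y / (p * z) := by positivity
    have hlog := Real.log_le_sub_one_of_pos ht
    rw [Real.log_div (by positivity) (by positivity), Real.log_mul hx.ne' hy.ne',
        Real.log_mul hp0.ne' hz.ne'] at hlog
    have hpz : p * (x * y / (p * z)) = x * y / z := by
      field_simp
    have h5 : p * (Real.log x + Real.log y - (Real.log p + Real.log z)) ≤ x * y / z - p := by
      calc p * (Real.log x + Real.log y - (Real.log p + Real.log z))
          ≤ p * (x * y / (p * z) - 1) := mul_le_mul_of_nonneg_left hlog hp0.le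
        _ = x * y / z - p := by rw [mul_sub, hpz, mul_one]
    nlinarith [h5]

lemma gibbs_main {S T U : Type*} (SA : Finset S) (SB : Finset T) (SC : Finset U)
    (q : S → T → U → ℝ) (qAC : S → U → ℝ) (qBC : T → U → ℝ) (qC : U → ℝ)
    (hq : ∀ a b c, 0 ≤ q a b c)
    (hAC : ∀ a c, qAC a c = ∑ b ∈ SB, q a b c)
    (hBC : ∀ b c, qBC b c = ∑ a ∈ SA, q a b c)
    (hC : ∀ c, qC c = ∑ a ∈ SA, ∑ b ∈ SB, q a b c)
    (htot : ∑ c ∈ SC, qC c = 1) :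
    ((∑ a ∈ SA, ∑ b ∈ SB, ∑ c ∈ SC, Real.negMulLog (q a b c))
        + ∑ c ∈ SC, Real.negMulLog (qC c))
      ≤ (∑ a ∈ SA, ∑ c ∈ SC, Real.negMulLog (qAC a c))
        + ∑ b ∈ SB, ∑ c ∈ SC, Real.negMulLog (qBC b c) := by
  classical
  have hqAC0 : ∀ a c, 0 ≤ qAC a c := fun a c => by
    rw [hAC]; exact Finset.sum_nonneg fun b _ => hq a b c
  have hqBC0 : ∀ b c, 0 ≤ qBC b c := fun b c => by
    rw [hBC]; exact Finset.sum_nonneg fun a _ => hq a b c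
  have hqC0 : ∀ c, 0 ≤ qC c := fun c => by
    rw [hC]; exact Finset.sum_nonneg fun a _ => Finset.sum_nonneg fun b _ => hq a b c
  have hCalt : ∀ c, qC c = ∑ a ∈ SA, qAC a c := fun c => by
    rw [hC]; exact Finset.sum_congr rfl fun a _ => (hAC a c).symm
  have hCalt2 : ∀ c, qC c = ∑ b ∈ SB, qBC b c := fun c => by
    rw [hC, Finset.sum_comm]; exact Finset.sum_congr rfl fun b _ => (hBC b c).symm
  -- expansions
  have EAC : (∑ a ∈ SA, ∑ c ∈ SC, Real.negMulLog (qAC a c))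
      = ∑ a ∈ SA, ∑ b ∈ SB, ∑ c ∈ SC, q a b c * (-Real.log (qAC a c)) := by
    refine Finset.sum_congr rfl fun a _ => ?_
    calc ∑ c ∈ SC, Real.negMulLog (qAC a c)
        = ∑ c ∈ SC, ∑ b ∈ SB, q a b c * (-Real.log (qAC a c)) := by
          refine Finset.sum_congr rfl fun c _ => ?_
          rw [negMulLog_eq]
          nth_rewrite 1 [hAC a c]
          rw [Finset.sum_mul]
      _ = ∑ b ∈ SB, ∑ c ∈ SC, q a b c * (-Real.log (qAC a c)) := Finset.sum_comm
  have EBC : (∑ b ∈ SB, ∑ c ∈ SC, Real.negMulLog (qBC b c))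
      = ∑ a ∈ SA, ∑ b ∈ SB, ∑ c ∈ SC, q a b c * (-Real.log (qBC b c)) := by
    calc ∑ b ∈ SB, ∑ c ∈ SC, Real.negMulLog (qBC b c)
        = ∑ b ∈ SB, ∑ c ∈ SC, ∑ a ∈ SA, q a b c * (-Real.log (qBC b c)) := by
          refine Finset.sum_congr rfl fun b _ => Finset.sum_congr rfl fun c _ => ?_
          rw [negMulLog_eq]
          nth_rewrite 1 [hBC b c]
          rw [Finset.sum_mul]
      _ = ∑ b ∈ SB, ∑ a ∈ SA, ∑ c ∈ SC, q a b c * (-Real.log (qBC b c)) :=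
          Finset.sum_congr rfl fun b _ => Finset.sum_comm
      _ = ∑ a ∈ SA, ∑ b ∈ SB, ∑ c ∈ SC, q a b c * (-Real.log (qBC b c)) := Finset.sum_comm
  have EC : (∑ c ∈ SC, Real.negMulLog (qC c))
      = ∑ a ∈ SA, ∑ b ∈ SB, ∑ c ∈ SC, q a b c * (-Real.log (qC c)) := by
    calc ∑ c ∈ SC, Real.negMulLog (qC c)
        = ∑ c ∈ SC, ∑ a ∈ SA, ∑ b ∈ SB, q a b c * (-Real.log (qC c)) := by
          refine Finset.sum_congr rfl fun c _ => ?_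
          rw [negMulLog_eq]
          nth_rewrite 1 [hC c]
          rw [Finset.sum_mul]
          refine Finset.sum_congr rfl fun a _ => ?_
          rw [Finset.sum_mul]
      _ = ∑ a ∈ SA, ∑ c ∈ SC, ∑ b ∈ SB, q a b c * (-Real.log (qC c)) := Finset.sum_comm
      _ = ∑ a ∈ SA, ∑ b ∈ SB, ∑ c ∈ SC, q a b c * (-Real.log (qC c)) :=
          Finset.sum_congr rfl fun a _ => Finset.sum_comm
  have E3 : (∑ a ∈ SA, ∑ b ∈ SB, ∑ c ∈ SC, Real.negMulLog (q a b c))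
      = ∑ a ∈ SA, ∑ b ∈ SB, ∑ c ∈ SC, q a b c * (-Real.log (q a b c)) :=
    Finset.sum_congr rfl fun a _ => Finset.sum_congr rfl fun b _ =>
      Finset.sum_congr rfl fun c _ => negMulLog_eq _
  rw [EAC, EBC, EC, E3]
  -- totals
  have hq1 : ∑ a ∈ SA, ∑ b ∈ SB, ∑ c ∈ SC, q a b c = 1 := by
    rw [← htot]
    calc ∑ a ∈ SA, ∑ b ∈ SB, ∑ c ∈ SC, q a b c
        = ∑ a ∈ SA, ∑ c ∈ SC, ∑ b ∈ SB, q a b c :=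
          Finset.sum_congr rfl fun a _ => Finset.sum_comm
      _ = ∑ c ∈ SC, ∑ a ∈ SA, ∑ b ∈ SB, q a b c := Finset.sum_comm
      _ = ∑ c ∈ SC, qC c := Finset.sum_congr rfl fun c _ => (hC c).symm
  have hesum : ∑ a ∈ SA, ∑ b ∈ SB, ∑ c ∈ SC,
      (if 0 < qC c then qAC a c * qBC b c / qC c else 0) ≤ 1 := by
    have hinner : ∀ c ∈ SC, (∑ a ∈ SA, ∑ b ∈ SB,
        (if 0 < qC c then qAC a c * qBC b c / qC c else 0)) ≤ qC c := by
      intro c _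
      by_cases hc : 0 < qC c
      · have inner : ∀ a, ∑ b ∈ SB, (if 0 < qC c then qAC a c * qBC b c / qC c else 0)
            = qAC a c * qC c / qC c := fun a => by
          simp only [if_pos hc]
          rw [← Finset.sum_div, ← Finset.mul_sum, ← hCalt2 c]
        rw [Finset.sum_congr rfl fun a _ => inner a, ← Finset.sum_div, ← Finset.sum_mul,
          ← hCalt c, mul_div_assoc, div_self hc.ne', mul_one]
      · rw [Finset.sum_congr rfl fun a _ => Finset.sum_congr rfl fun b _ => if_neg hc]
        simp only [Finset.sum_const_zero]
        exact hqC0 c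
    calc ∑ a ∈ SA, ∑ b ∈ SB, ∑ c ∈ SC, (if 0 < qC c then qAC a c * qBC b c / qC c else 0)
        = ∑ a ∈ SA, ∑ c ∈ SC, ∑ b ∈ SB, (if 0 < qC c then qAC a c * qBC b c / qC c else 0) :=
          Finset.sum_congr rfl fun a _ => Finset.sum_comm
      _ = ∑ c ∈ SC, ∑ a ∈ SA, ∑ b ∈ SB, (if 0 < qC c then qAC a c * qBC b c / qC c else 0) :=
          Finset.sum_comm
      _ ≤ ∑ c ∈ SC, qC c := Finset.sum_le_sum hinner
      _ = 1 := htot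
  have key : ∑ a ∈ SA, ∑ b ∈ SB, ∑ c ∈ SC,
      (q a b c - (if 0 < qC c then qAC a c * qBC b c / qC c else 0))
      ≤ ∑ a ∈ SA, ∑ b ∈ SB, ∑ c ∈ SC,
        ((q a b c * (-Real.log (qAC a c)) + q a b c * (-Real.log (qBC b c)))
          - (q a b c * (-Real.log (q a b c)) + q a b c * (-Real.log (qC c)))) := by
    refine Finset.sum_le_sum fun a ha => Finset.sum_le_sum fun b hb =>
      Finset.sum_le_sum fun c hc => ?_
    have h2 : q a b c ≤ qAC a c := by
      rw [hAC]; exact Finset.single_le_sum (fun b' _ => hq a b' c) hb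
    have h3 : q a b c ≤ qBC b c := by
      rw [hBC]; exact Finset.single_le_sum (fun a' _ => hq a' b c) ha
    have h4 : qAC a c ≤ qC c := by
      rw [hCalt c]; exact Finset.single_le_sum (fun a' _ => hqAC0 a' c) ha
    exact gibbs_term (q a b c) (qAC a c) (qBC b c) (qC c) (hq a b c) h2 h3 h4
  simp only [Finset.sum_sub_distrib, Finset.sum_add_distrib] at key
  rw [hq1] at key
  linarith [key, hesum]

lemma gibbs_eq {S T U : Type*} (SA : Finset S) (SB : Finset T) (SC : Finset U)
    (q : S → T → U → ℝ) (qAC : S → U → ℝ) (qBC : T → U → ℝ) (qC : U → ℝ)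
    (hq : ∀ a b c, 0 ≤ q a b c)
    (hAC : ∀ a c, qAC a c = ∑ b ∈ SB, q a b c)
    (hBC : ∀ b c, qBC b c = ∑ a ∈ SA, q a b c)
    (hC : ∀ c, qC c = ∑ a ∈ SA, ∑ b ∈ SB, q a b c)
    (hfact : ∀ a b c, q a b c * qC c = qAC a c * qBC b c) :
    ((∑ a ∈ SA, ∑ b ∈ SB, ∑ c ∈ SC, Real.negMulLog (q a b c))
        + ∑ c ∈ SC, Real.negMulLog (qC c))
      = (∑ a ∈ SA, ∑ c ∈ SC, Real.negMulLog (qAC a c))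
        + ∑ b ∈ SB, ∑ c ∈ SC, Real.negMulLog (qBC b c) := by
  classical
  have hqAC0 : ∀ a c, 0 ≤ qAC a c := fun a c => by
    rw [hAC]; exact Finset.sum_nonneg fun b _ => hq a b c
  have hCalt : ∀ c, qC c = ∑ a ∈ SA, qAC a c := fun c => by
    rw [hC]; exact Finset.sum_congr rfl fun a _ => (hAC a c).symm
  have EAC : (∑ a ∈ SA, ∑ c ∈ SC, Real.negMulLog (qAC a c))
      = ∑ a ∈ SA, ∑ b ∈ SB, ∑ c ∈ SC, q a b c * (-Real.log (qAC a c)) := by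
    refine Finset.sum_congr rfl fun a _ => ?_
    calc ∑ c ∈ SC, Real.negMulLog (qAC a c)
        = ∑ c ∈ SC, ∑ b ∈ SB, q a b c * (-Real.log (qAC a c)) := by
          refine Finset.sum_congr rfl fun c _ => ?_
          rw [negMulLog_eq]
          nth_rewrite 1 [hAC a c]
          rw [Finset.sum_mul]
      _ = ∑ b ∈ SB, ∑ c ∈ SC, q a b c * (-Real.log (qAC a c)) := Finset.sum_comm
  have EBC : (∑ b ∈ SB, ∑ c ∈ SC, Real.negMulLog (qBC b c))
      = ∑ a ∈ SA, ∑ b ∈ SB, ∑ c ∈ SC, q a b c * (-Real.log (qBC b c)) := by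
    calc ∑ b ∈ SB, ∑ c ∈ SC, Real.negMulLog (qBC b c)
        = ∑ b ∈ SB, ∑ c ∈ SC, ∑ a ∈ SA, q a b c * (-Real.log (qBC b c)) := by
          refine Finset.sum_congr rfl fun b _ => Finset.sum_congr rfl fun c _ => ?_
          rw [negMulLog_eq]
          nth_rewrite 1 [hBC b c]
          rw [Finset.sum_mul]
      _ = ∑ b ∈ SB, ∑ a ∈ SA, ∑ c ∈ SC, q a b c * (-Real.log (qBC b c)) :=
          Finset.sum_congr rfl fun b _ => Finset.sum_comm
      _ = ∑ a ∈ SA, ∑ b ∈ SB, ∑ c ∈ SC, q a b c * (-Real.log (qBC b c)) := Finset.sum_comm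
  have EC : (∑ c ∈ SC, Real.negMulLog (qC c))
      = ∑ a ∈ SA, ∑ b ∈ SB, ∑ c ∈ SC, q a b c * (-Real.log (qC c)) := by
    calc ∑ c ∈ SC, Real.negMulLog (qC c)
        = ∑ c ∈ SC, ∑ a ∈ SA, ∑ b ∈ SB, q a b c * (-Real.log (qC c)) := by
          refine Finset.sum_congr rfl fun c _ => ?_
          rw [negMulLog_eq]
          nth_rewrite 1 [hC c]
          rw [Finset.sum_mul]
          refine Finset.sum_congr rfl fun a _ => ?_
          rw [Finset.sum_mul]
      _ = ∑ a ∈ SA, ∑ c ∈ SC, ∑ b ∈ SB, q a b c * (-Real.log (qC c)) := Finset.sum_comm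
      _ = ∑ a ∈ SA, ∑ b ∈ SB, ∑ c ∈ SC, q a b c * (-Real.log (qC c)) :=
          Finset.sum_congr rfl fun a _ => Finset.sum_comm
  have E3 : (∑ a ∈ SA, ∑ b ∈ SB, ∑ c ∈ SC, Real.negMulLog (q a b c))
      = ∑ a ∈ SA, ∑ b ∈ SB, ∑ c ∈ SC, q a b c * (-Real.log (q a b c)) :=
    Finset.sum_congr rfl fun a _ => Finset.sum_congr rfl fun b _ =>
      Finset.sum_congr rfl fun c _ => negMulLog_eq _
  rw [EAC, EBC, EC, E3]
  rw [← Finset.sum_add_distrib, ← Finset.sum_add_distrib]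
  refine Finset.sum_congr rfl fun a ha => ?_
  rw [← Finset.sum_add_distrib, ← Finset.sum_add_distrib]
  refine Finset.sum_congr rfl fun b hb => ?_
  rw [← Finset.sum_add_distrib, ← Finset.sum_add_distrib]
  refine Finset.sum_congr rfl fun c hc => ?_
  rcases eq_or_lt_of_le (hq a b c) with h0 | h0
  · rw [← h0]; ring
  · have h2 : 0 < qAC a c := lt_of_lt_of_le h0 (by
      rw [hAC]; exact Finset.single_le_sum (fun b' _ => hq a b' c) hb)
    have h3 : 0 < qBC b c := lt_of_lt_of_le h0 (by
      rw [hBC]; exact Finset.single_le_sum (fun a' _ => hq a' b c) ha)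
    have h4 : 0 < qC c := lt_of_lt_of_le h2 (by
      rw [hCalt c]; exact Finset.single_le_sum (fun a' _ => hqAC0 a' c) ha)
    have hlog : Real.log (q a b c) + Real.log (qC c)
        = Real.log (qAC a c) + Real.log (qBC b c) := by
      rw [← Real.log_mul h0.ne' h4.ne', ← Real.log_mul h2.ne' h3.ne', hfact a b c]
    linear_combination (-(q a b c)) * hlog

end BSG

end BSGGibbs

section BSGStruct

namespace BSG

variable {Ω : Type*} [Fintype Ω]

lemma marg_mid (μ : FinProb Ω) {S T U : Type*} (A : Ω → S) (B : Ω → T) (C : Ω → U)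
    (SB : Finset T) (hB : ∀ ω, B ω ∈ SB) (a : S) (c : U) :
    prob μ (fun ω => (A ω, C ω)) (a, c)
      = ∑ b ∈ SB, prob μ (fun ω => (A ω, B ω, C ω)) (a, b, c) := by
  calc prob μ (fun ω => (A ω, C ω)) (a, c)
      = ∑ b ∈ SB, prob μ (fun ω => (B ω, (A ω, C ω))) (b, (a, c)) :=
        (prob_marg_fst μ B (fun ω => (A ω, C ω)) SB hB (a, c)).symm
    _ = ∑ b ∈ SB, prob μ (fun ω => (A ω, B ω, C ω)) (a, b, c) :=
        Finset.sum_congr rfl fun b _ => prob_eq_of_iff μ fun ω => by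
          simp only [Prod.mk.injEq]; tauto

lemma submod (μ : FinProb Ω) {S T U : Type*} (A : Ω → S) (B : Ω → T) (C : Ω → U) :
    entropy μ (fun ω => (A ω, B ω, C ω)) + entropy μ C
      ≤ entropy μ (fun ω => (A ω, C ω)) + entropy μ (fun ω => (B ω, C ω)) := by
  classical
  set SA := Finset.univ.image A with hSAdef
  set SB := Finset.univ.image B with hSBdef
  set SC := Finset.univ.image C with hSCdef
  have hA : ∀ ω, A ω ∈ SA := fun ω => Finset.mem_image_of_mem A (Finset.mem_univ ω)
  have hB : ∀ ω, B ω ∈ SB := fun ω => Finset.mem_image_of_mem B (Finset.mem_univ ω)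
  have hC : ∀ ω, C ω ∈ SC := fun ω => Finset.mem_image_of_mem C (Finset.mem_univ ω)
  have e3 : entropy μ (fun ω => (A ω, B ω, C ω))
      = ∑ a ∈ SA, ∑ b ∈ SB, ∑ c ∈ SC,
          Real.negMulLog (prob μ (fun ω => (A ω, B ω, C ω)) (a, b, c)) := by
    rw [ent_eq_sum μ (fun ω => (A ω, B ω, C ω)) (SA ×ˢ SB ×ˢ SC) (fun ω => by
      simp only [Finset.mem_product]; exact ⟨hA ω, hB ω, hC ω⟩)]
    rw [Finset.sum_product]
    exact Finset.sum_congr rfl fun a _ => Finset.sum_product _ _ _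
  have eAC : entropy μ (fun ω => (A ω, C ω))
      = ∑ a ∈ SA, ∑ c ∈ SC, Real.negMulLog (prob μ (fun ω => (A ω, C ω)) (a, c)) := by
    rw [ent_eq_sum μ (fun ω => (A ω, C ω)) (SA ×ˢ SC) (fun ω => by
      simp only [Finset.mem_product]; exact ⟨hA ω, hC ω⟩)]
    exact Finset.sum_product _ _ _
  have eBC : entropy μ (fun ω => (B ω, C ω))
      = ∑ b ∈ SB, ∑ c ∈ SC, Real.negMulLog (prob μ (fun ω => (B ω, C ω)) (b, c)) := by
    rw [ent_eq_sum μ (fun ω => (B ω, C ω)) (SB ×ˢ SC) (fun ω => by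
      simp only [Finset.mem_product]; exact ⟨hB ω, hC ω⟩)]
    exact Finset.sum_product _ _ _
  have eC : entropy μ C = ∑ c ∈ SC, Real.negMulLog (prob μ C c) := ent_eq_sum μ C SC hC
  rw [e3, eAC, eBC, eC]
  refine gibbs_main SA SB SC (fun a b c => prob μ (fun ω => (A ω, B ω, C ω)) (a, b, c))
    (fun a c => prob μ (fun ω => (A ω, C ω)) (a, c))
    (fun b c => prob μ (fun ω => (B ω, C ω)) (b, c))
    (fun c => prob μ C c)
    (fun a b c => prob_nonneg μ _ _)
    (fun a c => marg_mid μ A B C SB hB a c)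
    (fun b c => (prob_marg_fst μ A (fun ω => (B ω, C ω)) SA hA (b, c)).symm)
    (fun c => ?_)
    (sum_prob μ C SC hC)
  calc prob μ C c = ∑ a ∈ SA, prob μ (fun ω => (A ω, C ω)) (a, c) :=
        (prob_marg_fst μ A C SA hA c).symm
    _ = ∑ a ∈ SA, ∑ b ∈ SB, prob μ (fun ω => (A ω, B ω, C ω)) (a, b, c) :=
        Finset.sum_congr rfl fun a _ => marg_mid μ A B C SB hB a c

lemma ci_ent (μ : FinProb Ω) {S T U : Type*} (A : Ω → S) (B : Ω → T) (C : Ω → U)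
    (h : CondIndepGiven μ A B C) :
    entropy μ (fun ω => (A ω, B ω, C ω)) + entropy μ C
      = entropy μ (fun ω => (A ω, C ω)) + entropy μ (fun ω => (B ω, C ω)) := by
  classical
  set SA := Finset.univ.image A with hSAdef
  set SB := Finset.univ.image B with hSBdef
  set SC := Finset.univ.image C with hSCdef
  have hA : ∀ ω, A ω ∈ SA := fun ω => Finset.mem_image_of_mem A (Finset.mem_univ ω)
  have hB : ∀ ω, B ω ∈ SB := fun ω => Finset.mem_image_of_mem B (Finset.mem_univ ω)
  have hC : ∀ ω, C ω ∈ SC := fun ω => Finset.mem_image_of_mem C (Finset.mem_univ ω)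
  have e3 : entropy μ (fun ω => (A ω, B ω, C ω))
      = ∑ a ∈ SA, ∑ b ∈ SB, ∑ c ∈ SC,
          Real.negMulLog (prob μ (fun ω => (A ω, B ω, C ω)) (a, b, c)) := by
    rw [ent_eq_sum μ (fun ω => (A ω, B ω, C ω)) (SA ×ˢ SB ×ˢ SC) (fun ω => by
      simp only [Finset.mem_product]; exact ⟨hA ω, hB ω, hC ω⟩)]
    rw [Finset.sum_product]
    exact Finset.sum_congr rfl fun a _ => Finset.sum_product _ _ _
  have eAC : entropy μ (fun ω => (A ω, C ω))
      = ∑ a ∈ SA, ∑ c ∈ SC, Real.negMulLog (prob μ (fun ω => (A ω, C ω)) (a, c)) := by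
    rw [ent_eq_sum μ (fun ω => (A ω, C ω)) (SA ×ˢ SC) (fun ω => by
      simp only [Finset.mem_product]; exact ⟨hA ω, hC ω⟩)]
    exact Finset.sum_product _ _ _
  have eBC : entropy μ (fun ω => (B ω, C ω))
      = ∑ b ∈ SB, ∑ c ∈ SC, Real.negMulLog (prob μ (fun ω => (B ω, C ω)) (b, c)) := by
    rw [ent_eq_sum μ (fun ω => (B ω, C ω)) (SB ×ˢ SC) (fun ω => by
      simp only [Finset.mem_product]; exact ⟨hB ω, hC ω⟩)]
    exact Finset.sum_product _ _ _
  have eC : entropy μ C = ∑ c ∈ SC, Real.negMulLog (prob μ C c) := ent_eq_sum μ C SC hC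
  rw [e3, eAC, eBC, eC]
  refine gibbs_eq SA SB SC (fun a b c => prob μ (fun ω => (A ω, B ω, C ω)) (a, b, c))
    (fun a c => prob μ (fun ω => (A ω, C ω)) (a, c))
    (fun b c => prob μ (fun ω => (B ω, C ω)) (b, c))
    (fun c => prob μ C c)
    (fun a b c => prob_nonneg μ _ _)
    (fun a c => marg_mid μ A B C SB hB a c)
    (fun b c => (prob_marg_fst μ A (fun ω => (B ω, C ω)) SA hA (b, c)).symm)
    (fun c => ?_)
    (fun a b c => h a b c)
  calc prob μ C c = ∑ a ∈ SA, prob μ (fun ω => (A ω, C ω)) (a, c) :=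
        (prob_marg_fst μ A C SA hA c).symm
    _ = ∑ a ∈ SA, ∑ b ∈ SB, prob μ (fun ω => (A ω, B ω, C ω)) (a, b, c) :=
        Finset.sum_congr rfl fun a _ => marg_mid μ A B C SB hB a c

lemma ent_pair_le (μ : FinProb Ω) {S T : Type*} (F : Ω → S) (G : Ω → T) :
    entropy μ (fun ω => (F ω, G ω)) ≤ entropy μ F + entropy μ G := by
  have h := submod μ F G (fun _ : Ω => ())
  have e0 : entropy μ (fun _ : Ω => ()) = 0 := ent_const μ ()
  have e1 : entropy μ (fun ω => (F ω, G ω, ())) = entropy μ (fun ω => (F ω, G ω)) :=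
    ent_reorder μ (fun ω => (F ω, G ω)) (fun ω => (F ω, G ω, ()))
      (fun p => (p.1, p.2, ()))
      (fun p q hpq => by
        obtain ⟨p1, p2⟩ := p; obtain ⟨q1, q2⟩ := q
        simp only [Prod.mk.injEq] at hpq ⊢
        exact ⟨hpq.1, hpq.2.1⟩)
      (fun ω => rfl)
  have e2 : entropy μ (fun ω => (F ω, ())) = entropy μ F :=
    ent_reorder μ F (fun ω => (F ω, ())) (fun s => (s, ()))
      (fun a b hab => congrArg Prod.fst hab) (fun ω => rfl)
  have e3 : entropy μ (fun ω => (G ω, ())) = entropy μ G :=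
    ent_reorder μ G (fun ω => (G ω, ())) (fun s => (s, ()))
      (fun a b hab => congrArg Prod.fst hab) (fun ω => rfl)
  linarith [h, e0, e1, e2, e3]

lemma GT {G V' : Type*} [AddCommGroup G] (μ : FinProb Ω) (P Q M : Ω → G) (R : Ω → V')
    (f : V' → G) (d : G → V' → G)
    (h1 : ∀ ω, P ω + Q ω = f (R ω)) (h2 : ∀ ω, M ω = d (P ω) (R ω)) :
    entropy μ (fun ω => f (R ω)) ≤
      entropy μ P + entropy μ Q + entropy μ R - entropy μ (fun ω => (M ω, R ω)) := by
  have s1 : entropy μ (fun ω => (P ω, (Q ω, P ω + Q ω)))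
      = entropy μ (fun ω => (P ω, Q ω)) :=
    ent_reorder μ (fun ω => (P ω, Q ω)) (fun ω => (P ω, (Q ω, P ω + Q ω)))
      (fun p => (p.1, (p.2, p.1 + p.2)))
      (fun p q hpq => by
        obtain ⟨p1, p2⟩ := p; obtain ⟨q1, q2⟩ := q
        simp only [Prod.mk.injEq] at hpq ⊢
        exact ⟨hpq.1, hpq.2.1⟩)
      (fun ω => rfl)
  have s1' : entropy μ (fun ω => (P ω, Q ω)) ≤ entropy μ P + entropy μ Q := ent_pair_le μ P Q
  have s2 : entropy μ (fun ω => (P ω, P ω + Q ω))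
      ≤ entropy μ (fun ω => (P ω, (Q ω, P ω + Q ω))) :=
    ent_comp_le μ (fun ω => (P ω, (Q ω, P ω + Q ω))) (fun p => (p.1, p.2.2))
  have s3 := submod μ P R (fun ω => P ω + Q ω)
  have s4 : entropy μ (fun ω => (R ω, P ω + Q ω)) = entropy μ R := by
    have hfr : (fun ω => (R ω, P ω + Q ω)) = fun ω => (R ω, f (R ω)) :=
      funext fun ω => by rw [h1 ω]
    rw [hfr]
    exact ent_comp_inj μ R (fun r => (r, f r)) (fun r r' h => congrArg Prod.fst h)
  have s5 : entropy μ (fun ω => (M ω, R ω))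
      ≤ entropy μ (fun ω => (P ω, (R ω, P ω + Q ω))) := by
    have hmr : (fun ω => (M ω, R ω)) = fun ω => (d (P ω) (R ω), R ω) :=
      funext fun ω => by rw [h2 ω]
    rw [hmr]
    exact ent_comp_le μ (fun ω => (P ω, (R ω, P ω + Q ω))) (fun p => (d p.1 p.2.1, p.2.1))
  have s6 : entropy μ (fun ω => f (R ω)) = entropy μ (fun ω => P ω + Q ω) := by
    have hUf : (fun ω => P ω + Q ω) = fun ω => f (R ω) := funext h1
    rw [hUf]
  linarith [s1, s1', s2, s3, s4, s5, s6]

lemma ci_marg (μ : FinProb Ω) {S T U V : Type*} (P : Ω → S) (Q : Ω → T) (R : Ω → U)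
    (W : Ω → V) (h : CondIndepGiven μ (fun ω => (P ω, Q ω)) R W) :
    CondIndepGiven μ Q R W := by
  classical
  intro t u w
  set SP := Finset.univ.image P with hSPdef
  have hP : ∀ ω, P ω ∈ SP := fun ω => Finset.mem_image_of_mem P (Finset.mem_univ ω)
  have key : ∑ s ∈ SP, (prob μ (fun ω => ((P ω, Q ω), R ω, W ω)) ((s, t), u, w)
        * prob μ W w)
      = ∑ s ∈ SP, (prob μ (fun ω => ((P ω, Q ω), W ω)) ((s, t), w)
          * prob μ (fun ω => (R ω, W ω)) (u, w)) :=
    Finset.sum_congr rfl fun s _ => h (s, t) u w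
  have lhs1 : ∑ s ∈ SP, prob μ (fun ω => ((P ω, Q ω), R ω, W ω)) ((s, t), u, w)
      = prob μ (fun ω => (Q ω, R ω, W ω)) (t, u, w) := by
    calc ∑ s ∈ SP, prob μ (fun ω => ((P ω, Q ω), R ω, W ω)) ((s, t), u, w)
        = ∑ s ∈ SP, prob μ (fun ω => (P ω, (Q ω, R ω, W ω))) (s, (t, u, w)) :=
          Finset.sum_congr rfl fun s _ => prob_eq_of_iff μ fun ω => by
            simp only [Prod.mk.injEq]; tauto
      _ = prob μ (fun ω => (Q ω, R ω, W ω)) (t, u, w) :=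
          prob_marg_fst μ P (fun ω => (Q ω, R ω, W ω)) SP hP (t, u, w)
  have lhs2 : ∑ s ∈ SP, prob μ (fun ω => ((P ω, Q ω), W ω)) ((s, t), w)
      = prob μ (fun ω => (Q ω, W ω)) (t, w) := by
    calc ∑ s ∈ SP, prob μ (fun ω => ((P ω, Q ω), W ω)) ((s, t), w)
        = ∑ s ∈ SP, prob μ (fun ω => (P ω, (Q ω, W ω))) (s, (t, w)) :=
          Finset.sum_congr rfl fun s _ => prob_eq_of_iff μ fun ω => by
            simp only [Prod.mk.injEq]; tauto
      _ = prob μ (fun ω => (Q ω, W ω)) (t, w) :=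
          prob_marg_fst μ P (fun ω => (Q ω, W ω)) SP hP (t, w)
  rw [← Finset.sum_mul, ← Finset.sum_mul, lhs1, lhs2] at key
  exact key

lemma ci_swap (μ : FinProb Ω) {S T U V : Type*} (P : Ω → S) (Q : Ω → T) (R : Ω → U)
    (W : Ω → V) (h : CondIndepGiven μ (fun ω => (P ω, Q ω)) R W) :
    CondIndepGiven μ (fun ω => (Q ω, P ω)) R W := by
  intro s t u
  obtain ⟨s1, s2⟩ := s
  have t1 : prob μ (fun ω => ((Q ω, P ω), R ω, W ω)) ((s1, s2), t, u)
      = prob μ (fun ω => ((P ω, Q ω), R ω, W ω)) ((s2, s1), t, u) :=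
    prob_eq_of_iff μ fun ω => by simp only [Prod.mk.injEq]; tauto
  have t2 : prob μ (fun ω => ((Q ω, P ω), W ω)) ((s1, s2), u)
      = prob μ (fun ω => ((P ω, Q ω), W ω)) ((s2, s1), u) :=
    prob_eq_of_iff μ fun ω => by simp only [Prod.mk.injEq]; tauto
  rw [t1, t2]
  exact h (s2, s1) t u

lemma ci_aux (μ : FinProb Ω) {S T U V : Type*} (P : Ω → S) (Q : Ω → T) (R : Ω → U)
    (W : Ω → V) (h : CondIndepGiven μ (fun ω => (P ω, Q ω)) R W) :
    CondIndepGiven μ P R (fun ω => (W ω, Q ω)) := by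
  intro s t u
  obtain ⟨w, q⟩ := u
  by_cases hw : prob μ W w = 0
  · have z1 : prob μ (fun ω => (P ω, (W ω, Q ω))) (s, (w, q)) = 0 := by
      refine le_antisymm ?_ (prob_nonneg μ _ _)
      calc prob μ (fun ω => (P ω, (W ω, Q ω))) (s, (w, q))
          = prob μ (fun ω => (W ω, (P ω, Q ω))) (w, (s, q)) :=
            prob_eq_of_iff μ fun ω => by simp only [Prod.mk.injEq]; tauto
        _ ≤ prob μ W w := prob_pair_le_fst μ W (fun ω => (P ω, Q ω)) w (s, q)
        _ = 0 := hw
    have z2 : prob μ (fun ω => (W ω, Q ω)) (w, q) = 0 := by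
      refine le_antisymm ?_ (prob_nonneg μ _ _)
      calc prob μ (fun ω => (W ω, Q ω)) (w, q) ≤ prob μ W w :=
            prob_pair_le_fst μ W Q w q
        _ = 0 := hw
    rw [z1, z2, mul_zero, zero_mul]
  · have dag := h (s, q) t w
    have ddag := ci_marg μ P Q R W h q t w
    have t1 : prob μ (fun ω => (P ω, R ω, (W ω, Q ω))) (s, t, (w, q))
        = prob μ (fun ω => ((P ω, Q ω), R ω, W ω)) ((s, q), t, w) :=
      prob_eq_of_iff μ fun ω => by simp only [Prod.mk.injEq]; tauto
    have t2 : prob μ (fun ω => (W ω, Q ω)) (w, q)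
        = prob μ (fun ω => (Q ω, W ω)) (q, w) :=
      prob_eq_of_iff μ fun ω => by simp only [Prod.mk.injEq]; tauto
    have t3 : prob μ (fun ω => (P ω, (W ω, Q ω))) (s, (w, q))
        = prob μ (fun ω => ((P ω, Q ω), W ω)) ((s, q), w) :=
      prob_eq_of_iff μ fun ω => by simp only [Prod.mk.injEq]; tauto
    have t4 : prob μ (fun ω => (R ω, (W ω, Q ω))) (t, (w, q))
        = prob μ (fun ω => (Q ω, R ω, W ω)) (q, t, w) :=
      prob_eq_of_iff μ fun ω => by simp only [Prod.mk.injEq]; tauto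
    rw [t1, t2, t3, t4]
    refine mul_right_cancel₀ hw ?_
    linear_combination prob μ (fun ω => (Q ω, W ω)) (q, w) * dag
      - prob μ (fun ω => ((P ω, Q ω), W ω)) ((s, q), w) * ddag

end BSG

end BSGStruct

/-- entropy Balog–Szemerédi–Gowers lemma: with
`H(X,Y) ≥ H(X) + H(Y) − log K` and `H(X+Y) ≤ H(X)/2 + H(Y)/2 + log K`, if `X₁, X₂` are
conditionally independent trials of `X` given `Y`, and `Y'` is such that `(X₁,X₂,Y)` and
`Y'` are conditionally independent given `X₁` with `(X₁,Y')` a copy of `(X₁,Y)`, then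
`X₂` and `Y'` are conditionally independent given `(X₁,Y)`,
`H(X₂|X₁,Y) ≥ H(X) − log K`, `H(Y'|X₁,Y) ≥ H(Y) − log K`, and
`H(X₂+Y'|X₁,Y) ≤ H(X)/2 + H(Y)/2 + 7·log K`. -/

theorem entropy_bsg {G Ω Ω' : Type*} [AddCommGroup G] [Fintype Ω] [Fintype Ω']
    (μ : FinProb Ω) (X Y : Ω → G) (K : ℝ) (hK : 1 ≤ K)
    (hent : entropy μ (fun ω => (X ω, Y ω)) ≥ entropy μ X + entropy μ Y - Real.log K)
    (hsum : entropy μ (fun ω => X ω + Y ω) ≤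
      entropy μ X / 2 + entropy μ Y / 2 + Real.log K)
    (μ' : FinProb Ω') (X₁ X₂ Y₀ Y' : Ω' → G)
    -- `X₁, X₂` are conditionally independent trials of `X` given `Y` (realised by `Y₀`):
    (hcopy₁ : IdentDist μ' (fun ω => (X₁ ω, Y₀ ω)) μ (fun ω => (X ω, Y ω)))
    (hcopy₂ : IdentDist μ' (fun ω => (X₂ ω, Y₀ ω)) μ (fun ω => (X ω, Y ω)))
    (hci : CondIndepGiven μ' X₁ X₂ Y₀)
    -- `(X₁, Y')` is a copy of `(X₁, Y₀)`, with `(X₂, Y₀)` and `Y'` conditionally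
    -- independent given `X₁`:
    (hcopy' : IdentDist μ' (fun ω => (X₁ ω, Y' ω)) μ' (fun ω => (X₁ ω, Y₀ ω)))
    (hci' : CondIndepGiven μ' (fun ω => (X₂ ω, Y₀ ω)) Y' X₁) :
    CondIndepGiven μ' X₂ Y' (fun ω => (X₁ ω, Y₀ ω)) ∧
    condEntropy μ' X₂ (fun ω => (X₁ ω, Y₀ ω)) ≥ entropy μ X - Real.log K ∧
    condEntropy μ' Y' (fun ω => (X₁ ω, Y₀ ω)) ≥ entropy μ Y - Real.log K ∧
    condEntropy μ' (fun ω => X₂ ω + Y' ω) (fun ω => (X₁ ω, Y₀ ω)) ≤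
      entropy μ X / 2 + entropy μ Y / 2 + 7 * Real.log K := by
  classical
  have hlogK : 0 ≤ Real.log K := Real.log_nonneg hK
  -- entropy identities from the identical distributions
  have hXY : entropy μ' (fun ω => (X₁ ω, Y₀ ω)) = entropy μ (fun ω => (X ω, Y ω)) :=
    BSG.ent_identDist μ' μ _ _ hcopy₁
  have hXY₂ : entropy μ' (fun ω => (X₂ ω, Y₀ ω)) = entropy μ (fun ω => (X ω, Y ω)) :=
    BSG.ent_identDist μ' μ _ _ hcopy₂
  have hXY' : entropy μ' (fun ω => (X₁ ω, Y' ω)) = entropy μ (fun ω => (X ω, Y ω)) :=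
    (BSG.ent_identDist μ' μ' _ _ hcopy').trans hXY
  have hidX₁ : IdentDist μ' X₁ μ X := BSG.identDist_comp μ' μ _ _ hcopy₁ Prod.fst
  have hidX₂ : IdentDist μ' X₂ μ X := BSG.identDist_comp μ' μ _ _ hcopy₂ Prod.fst
  have hidY₀ : IdentDist μ' Y₀ μ Y := BSG.identDist_comp μ' μ _ _ hcopy₁ Prod.snd
  have hidY' : IdentDist μ' Y' μ' Y₀ := BSG.identDist_comp μ' μ' _ _ hcopy' Prod.snd
  have hX₁ : entropy μ' X₁ = entropy μ X := BSG.ent_identDist μ' μ X₁ X hidX₁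
  have hX₂ : entropy μ' X₂ = entropy μ X := BSG.ent_identDist μ' μ X₂ X hidX₂
  have hY₀ : entropy μ' Y₀ = entropy μ Y := BSG.ent_identDist μ' μ Y₀ Y hidY₀
  have hY' : entropy μ' Y' = entropy μ Y :=
    (BSG.ent_identDist μ' μ' Y' Y₀ hidY').trans hY₀
  have hS₁ : entropy μ' (fun ω => X₁ ω + Y₀ ω) = entropy μ (fun ω => X ω + Y ω) :=
    BSG.ent_identDist μ' μ _ _ (BSG.identDist_comp μ' μ _ _ hcopy₁ (fun p => p.1 + p.2))
  have hS₂ : entropy μ' (fun ω => X₂ ω + Y₀ ω) = entropy μ (fun ω => X ω + Y ω) :=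
    BSG.ent_identDist μ' μ _ _ (BSG.identDist_comp μ' μ _ _ hcopy₂ (fun p => p.1 + p.2))
  have hS' : entropy μ' (fun ω => X₁ ω + Y' ω) = entropy μ (fun ω => X ω + Y ω) :=
    (BSG.ent_identDist μ' μ' _ _
      (BSG.identDist_comp μ' μ' _ _ hcopy' (fun p => p.1 + p.2))).trans hS₁
  -- conditional independence consequences
  have hciYY : CondIndepGiven μ' Y₀ Y' X₁ := BSG.ci_marg μ' X₂ Y₀ Y' X₁ hci'
  have hci₂ : CondIndepGiven μ' Y₀ Y' (fun ω => (X₁ ω, X₂ ω)) :=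
    BSG.ci_aux μ' Y₀ X₂ Y' X₁ (BSG.ci_swap μ' X₂ Y₀ Y' X₁ hci')
  -- entropy identities from conditional independence
  have E1 : entropy μ' (fun ω => (X₁ ω, X₂ ω, Y₀ ω)) + entropy μ' Y₀
      = entropy μ' (fun ω => (X₁ ω, Y₀ ω)) + entropy μ' (fun ω => (X₂ ω, Y₀ ω)) :=
    BSG.ci_ent μ' X₁ X₂ Y₀ hci
  have E2 : entropy μ' (fun ω => (Y₀ ω, Y' ω, X₁ ω)) + entropy μ' X₁
      = entropy μ' (fun ω => (Y₀ ω, X₁ ω)) + entropy μ' (fun ω => (Y' ω, X₁ ω)) :=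
    BSG.ci_ent μ' Y₀ Y' X₁ hciYY
  have E3 : entropy μ' (fun ω => (Y₀ ω, Y' ω, (X₁ ω, X₂ ω))) + entropy μ' (fun ω => (X₁ ω, X₂ ω))
      = entropy μ' (fun ω => (Y₀ ω, (X₁ ω, X₂ ω)))
        + entropy μ' (fun ω => (Y' ω, (X₁ ω, X₂ ω))) :=
    BSG.ci_ent μ' Y₀ Y' (fun ω => (X₁ ω, X₂ ω)) hci₂
  -- reorderings
  have r1 : entropy μ' (fun ω => (X₂ ω, (X₁ ω, Y₀ ω)))
      = entropy μ' (fun ω => (X₁ ω, X₂ ω, Y₀ ω)) :=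
    BSG.ent_reorder μ' (fun ω => (X₁ ω, X₂ ω, Y₀ ω)) (fun ω => (X₂ ω, (X₁ ω, Y₀ ω)))
      (fun p => (p.2.1, (p.1, p.2.2)))
      (fun a b hab => by
        obtain ⟨a1, a2, a3⟩ := a; obtain ⟨b1, b2, b3⟩ := b
        simp only [Prod.mk.injEq] at hab ⊢; tauto)
      (fun ω => rfl)
  have r2 : entropy μ' (fun ω => (Y' ω, (X₁ ω, Y₀ ω)))
      = entropy μ' (fun ω => (Y₀ ω, Y' ω, X₁ ω)) :=
    BSG.ent_reorder μ' (fun ω => (Y₀ ω, Y' ω, X₁ ω)) (fun ω => (Y' ω, (X₁ ω, Y₀ ω)))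
      (fun p => (p.2.1, (p.2.2, p.1)))
      (fun a b hab => by
        obtain ⟨a1, a2, a3⟩ := a; obtain ⟨b1, b2, b3⟩ := b
        simp only [Prod.mk.injEq] at hab ⊢; tauto)
      (fun ω => rfl)
  have r3 : entropy μ' (fun ω => (Y₀ ω, X₁ ω)) = entropy μ' (fun ω => (X₁ ω, Y₀ ω)) :=
    BSG.ent_reorder μ' (fun ω => (X₁ ω, Y₀ ω)) (fun ω => (Y₀ ω, X₁ ω))
      (fun p => (p.2, p.1))
      (fun a b hab => by
        obtain ⟨a1, a2⟩ := a; obtain ⟨b1, b2⟩ := b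
        simp only [Prod.mk.injEq] at hab ⊢; tauto)
      (fun ω => rfl)
  have r4 : entropy μ' (fun ω => (Y' ω, X₁ ω)) = entropy μ' (fun ω => (X₁ ω, Y' ω)) :=
    BSG.ent_reorder μ' (fun ω => (X₁ ω, Y' ω)) (fun ω => (Y' ω, X₁ ω))
      (fun p => (p.2, p.1))
      (fun a b hab => by
        obtain ⟨a1, a2⟩ := a; obtain ⟨b1, b2⟩ := b
        simp only [Prod.mk.injEq] at hab ⊢; tauto)
      (fun ω => rfl)
  have r5 : entropy μ' (fun ω => (Y₀ ω, X₁ ω, (X₂ ω, Y' ω)))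
      = entropy μ' (fun ω => (Y₀ ω, Y' ω, (X₁ ω, X₂ ω))) :=
    BSG.ent_reorder μ' (fun ω => (Y₀ ω, Y' ω, (X₁ ω, X₂ ω)))
      (fun ω => (Y₀ ω, X₁ ω, (X₂ ω, Y' ω)))
      (fun p => (p.1, (p.2.2.1, (p.2.2.2, p.2.1))))
      (fun a b hab => by
        obtain ⟨a1, a2, a3, a4⟩ := a; obtain ⟨b1, b2, b3, b4⟩ := b
        simp only [Prod.mk.injEq] at hab ⊢; tauto)
      (fun ω => rfl)
  have r6 : entropy μ' (fun ω => (Y' ω, (X₁ ω, X₂ ω)))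
      = entropy μ' (fun ω => (X₁ ω, (X₂ ω, Y' ω))) :=
    BSG.ent_reorder μ' (fun ω => (X₁ ω, (X₂ ω, Y' ω))) (fun ω => (Y' ω, (X₁ ω, X₂ ω)))
      (fun p => (p.2.2, (p.1, p.2.1)))
      (fun a b hab => by
        obtain ⟨a1, a2, a3⟩ := a; obtain ⟨b1, b2, b3⟩ := b
        simp only [Prod.mk.injEq] at hab ⊢; tauto)
      (fun ω => rfl)
  have r7 : entropy μ' (fun ω => (Y₀ ω, (X₁ ω, X₂ ω)))
      = entropy μ' (fun ω => (X₁ ω, X₂ ω, Y₀ ω)) :=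
    BSG.ent_reorder μ' (fun ω => (X₁ ω, X₂ ω, Y₀ ω)) (fun ω => (Y₀ ω, (X₁ ω, X₂ ω)))
      (fun p => (p.2.2, (p.1, p.2.1)))
      (fun a b hab => by
        obtain ⟨a1, a2, a3⟩ := a; obtain ⟨b1, b2, b3⟩ := b
        simp only [Prod.mk.injEq] at hab ⊢; tauto)
      (fun ω => rfl)
  have r8 : entropy μ' (fun ω => (X₁ ω, (Y₀ ω, Y' ω)))
      = entropy μ' (fun ω => (Y₀ ω, Y' ω, X₁ ω)) :=
    BSG.ent_reorder μ' (fun ω => (Y₀ ω, Y' ω, X₁ ω)) (fun ω => (X₁ ω, (Y₀ ω, Y' ω)))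
      (fun p => (p.2.2, (p.1, p.2.1)))
      (fun a b hab => by
        obtain ⟨a1, a2, a3⟩ := a; obtain ⟨b1, b2, b3⟩ := b
        simp only [Prod.mk.injEq] at hab ⊢; tauto)
      (fun ω => rfl)
  -- the four conclusions
  refine ⟨BSG.ci_aux μ' X₂ Y₀ Y' X₁ hci', ?_, ?_, ?_⟩
  · -- H(X₂ | X₁, Y₀) ≥ H(X) - log K
    have cd2 : condEntropy μ' X₂ (fun ω => (X₁ ω, Y₀ ω))
        = entropy μ' (fun ω => (X₂ ω, (X₁ ω, Y₀ ω)))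
          - entropy μ' (fun ω => (X₁ ω, Y₀ ω)) := rfl
    rw [ge_iff_le, cd2]
    linarith [r1, E1, hXY, hXY₂, hY₀, hent]
  · -- H(Y' | X₁, Y₀) ≥ H(Y) - log K
    have cd3 : condEntropy μ' Y' (fun ω => (X₁ ω, Y₀ ω))
        = entropy μ' (fun ω => (Y' ω, (X₁ ω, Y₀ ω)))
          - entropy μ' (fun ω => (X₁ ω, Y₀ ω)) := rfl
    rw [ge_iff_le, cd3]
    linarith [r2, r3, r4, E2, hXY, hXY', hX₁, hent]
  · -- the sum bound
    have cd4 : condEntropy μ' (fun ω => X₂ ω + Y' ω) (fun ω => (X₁ ω, Y₀ ω))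
        = entropy μ' (fun ω => (X₂ ω + Y' ω, (X₁ ω, Y₀ ω)))
          - entropy μ' (fun ω => (X₁ ω, Y₀ ω)) := rfl
    have c1 : entropy μ' (fun ω => (X₂ ω + Y' ω, (X₁ ω, Y₀ ω)))
        ≤ entropy μ' (fun ω => X₂ ω + Y' ω) + entropy μ' (fun ω => (X₁ ω, Y₀ ω)) :=
      BSG.ent_pair_le μ' (fun ω => X₂ ω + Y' ω) (fun ω => (X₁ ω, Y₀ ω))
    -- first generalized triangle inequality
    have c2 : entropy μ' (fun ω => X₂ ω + Y' ω)
        ≤ entropy μ' (fun ω => X₂ ω + Y₀ ω) + entropy μ' (fun ω => Y' ω - Y₀ ω)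
          + entropy μ' (fun ω => (X₂ ω, Y' ω))
          - entropy μ' (fun ω => (Y₀ ω, (X₂ ω, Y' ω))) :=
      BSG.GT μ' (fun ω => X₂ ω + Y₀ ω) (fun ω => Y' ω - Y₀ ω) Y₀
        (fun ω => (X₂ ω, Y' ω)) (fun p => p.1 + p.2) (fun p r => p - r.1)
        (fun ω => by show X₂ ω + Y₀ ω + (Y' ω - Y₀ ω) = X₂ ω + Y' ω; abel)
        (fun ω => by show Y₀ ω = X₂ ω + Y₀ ω - X₂ ω; abel)
    -- second generalized triangle inequality
    have c4 : entropy μ' (fun ω => Y' ω - Y₀ ω)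
        ≤ entropy μ' (fun ω => X₁ ω + Y' ω) + entropy μ' (fun ω => -(X₁ ω + Y₀ ω))
          + entropy μ' (fun ω => (Y₀ ω, Y' ω))
          - entropy μ' (fun ω => (X₁ ω, (Y₀ ω, Y' ω))) :=
      BSG.GT μ' (fun ω => X₁ ω + Y' ω) (fun ω => -(X₁ ω + Y₀ ω)) X₁
        (fun ω => (Y₀ ω, Y' ω)) (fun p => p.2 - p.1) (fun p r => p - r.2)
        (fun ω => by show X₁ ω + Y' ω + -(X₁ ω + Y₀ ω) = Y' ω - Y₀ ω; abel)
        (fun ω => by show X₁ ω = X₁ ω + Y' ω - Y' ω; abel)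
    have hneg : entropy μ' (fun ω => -(X₁ ω + Y₀ ω))
        = entropy μ' (fun ω => X₁ ω + Y₀ ω) :=
      BSG.ent_comp_inj μ' (fun ω => X₁ ω + Y₀ ω) (fun x => -x) neg_injective
    have c3 := BSG.submod μ' Y₀ X₁ (fun ω => (X₂ ω, Y' ω))
    -- c3 : H(Y₀,(X₁,(X₂,Y'))) + H(X₂,Y') ≤ H(Y₀,(X₂,Y')) + H(X₁,(X₂,Y'))
    have c5 : entropy μ' (fun ω => (Y₀ ω, Y' ω)) ≤ entropy μ' Y₀ + entropy μ' Y' :=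
      BSG.ent_pair_le μ' Y₀ Y'
    have pXX : entropy μ' (fun ω => (X₁ ω, X₂ ω)) ≤ entropy μ' X₁ + entropy μ' X₂ :=
      BSG.ent_pair_le μ' X₁ X₂
    rw [cd4]
    linarith [c1, c2, c3, c4, c5, pXX, hneg, r3, r4, r5, r6, r7, r8, E1, E2, E3,
      hX₁, hX₂, hY₀, hY', hXY, hXY₂, hXY', hS₁, hS₂, hS', hent, hsum, hlogK]
end

section
/- L² flattening lemma: let G be a finite group, p a probability distribution on G, and p_U the uniform distribution on G. For every integer k ≥ 1 there exists a probability distribution p_k on G with entropy transport distance D(p, p_k) ≤ k·log 2 and ‖p_k − p_U‖_{ℓ²(G)} ≤ 2^{−k/2}·‖p − p_U‖_{ℓ²(G)}. -/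
open Real
open scoped BigOperators Pointwise Classical

section Aux
variable {Ω S : Type*} [Fintype Ω]

lemma prob_nonneg (μ : FinProb Ω) (X : Ω → S) (s : S) : 0 ≤ prob μ X s :=
  Finset.sum_nonneg fun ω _ => by split
                                  exacts [μ.nonneg ω, le_rfl]

lemma prob_le_one (μ : FinProb Ω) (X : Ω → S) (s : S) : prob μ X s ≤ 1 := by
  rw [← μ.sum_one]
  exact Finset.sum_le_sum fun ω _ => by split
                                        exacts [le_rfl, μ.nonneg ω]

lemma sum_prob_image (μ : FinProb Ω) (X : Ω → S) :
    ∑ s ∈ Finset.univ.image X, prob μ X s = 1 := by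
  rw [← μ.sum_one]
  unfold prob
  rw [Finset.sum_comm]
  refine Finset.sum_congr rfl fun ω _ => ?_
  rw [Finset.sum_ite_eq (Finset.univ.image X) (X ω) (fun _ => μ.p ω),
    if_pos (Finset.mem_image_of_mem X (Finset.mem_univ ω))]

lemma sum_prob_univ [Fintype S] (μ : FinProb Ω) (X : Ω → S) :
    ∑ s, prob μ X s = 1 := by
  rw [← μ.sum_one]
  unfold prob
  rw [Finset.sum_comm]
  refine Finset.sum_congr rfl fun ω _ => ?_
  rw [Finset.sum_ite_eq Finset.univ (X ω) (fun _ => μ.p ω), if_pos (Finset.mem_univ _)]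

lemma entropy_nonneg (μ : FinProb Ω) (X : Ω → S) : 0 ≤ entropy μ X :=
  Finset.sum_nonneg fun s _ => Real.negMulLog_nonneg (prob_nonneg μ X s) (prob_le_one μ X s)

lemma prob_id [Fintype S] (ν : FinProb S) (s : S) : prob ν id s = ν.p s := by
  unfold prob
  simp only [id_eq]
  rw [Finset.sum_ite_eq' Finset.univ s ν.p, if_pos (Finset.mem_univ _)]

lemma entropy_le_log_card (μ : FinProb Ω) (X : Ω → S) [Nonempty Ω] :
    entropy μ X ≤ Real.log ((Finset.univ.image X).card) := by
  classical
  set T := Finset.univ.image X with hT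
  have hTne : T.Nonempty := ⟨X (Classical.arbitrary Ω),
    Finset.mem_image_of_mem X (Finset.mem_univ _)⟩
  have hcard : (0:ℝ) < T.card := by exact_mod_cast hTne.card_pos
  have jensen := Real.concaveOn_negMulLog.le_map_sum (t := T)
    (w := fun _ => (T.card : ℝ)⁻¹) (p := fun s => prob μ X s)
    (fun i _ => by positivity)
    (by rw [Finset.sum_const, nsmul_eq_mul, mul_inv_cancel₀ hcard.ne'])
    (fun i _ => prob_nonneg μ X i)
  have hsum : ∑ i ∈ T, (T.card : ℝ)⁻¹ • prob μ X i = (T.card : ℝ)⁻¹ := by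
    rw [← Finset.smul_sum, sum_prob_image, smul_eq_mul, mul_one]
  rw [hsum] at jensen
  have h2 : ∑ i ∈ T, (T.card : ℝ)⁻¹ • Real.negMulLog (prob μ X i)
      = (T.card : ℝ)⁻¹ * entropy μ X := by
    rw [entropy, Finset.mul_sum]; rfl
  rw [h2] at jensen
  have h3 : Real.negMulLog ((T.card : ℝ)⁻¹) = (T.card : ℝ)⁻¹ * Real.log T.card := by
    rw [Real.negMulLog, Real.log_inv]; ring
  rw [h3] at jensen
  calc entropy μ X = (T.card : ℝ) * ((T.card : ℝ)⁻¹ * entropy μ X) := by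
        field_simp
    _ ≤ (T.card : ℝ) * ((T.card : ℝ)⁻¹ * Real.log T.card) :=
        mul_le_mul_of_nonneg_left jensen hcard.le
    _ = Real.log T.card := by field_simp

lemma prob_comp_equiv {n : Type*} [Fintype n] (μ : FinProb Ω) (e : Ω ≃ n) (X : Ω → S) (s : S) :
    prob ⟨μ.p ∘ e.symm, fun i => μ.nonneg _, by
      rw [← μ.sum_one]; exact Fintype.sum_equiv e.symm _ _ (fun i => rfl)⟩ (X ∘ e.symm) s
    = prob μ X s :=
  Fintype.sum_equiv e.symm _ _ (fun i => rfl)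

end Aux

section Flatten
variable {G : Type*} [Fintype G] [AddCommGroup G]

/-- partial signed sum of steps -/
noncomputable def Sb {k : ℕ} (a : Fin k → G) (b : Fin k → Bool) : G :=
  ∑ i, if b i then a i else 0

/-- the flattened density -/
noncomputable def Ff (p : FinProb G) {k : ℕ} (a : Fin k → G) (g : G) : ℝ :=
  (∑ b : Fin k → Bool, p.p (g - Sb a b)) / 2 ^ k

lemma Sb_cons {k : ℕ} (c : G) (a : Fin k → G) (b0 : Bool) (t : Fin k → Bool) :
    Sb (Fin.cons c a) (Fin.cons b0 t) = (if b0 then c else 0) + Sb a t := by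
  unfold Sb
  rw [Fin.sum_univ_succ]
  simp [Fin.cons_zero, Fin.cons_succ]

lemma Ff_cons (p : FinProb G) {k : ℕ} (c : G) (a : Fin k → G) (g : G) :
    Ff p (Fin.cons c a) g = (Ff p a g + Ff p a (g - c)) / 2 := by
  unfold Ff
  have he : ∑ b : Fin (k+1) → Bool, p.p (g - Sb (Fin.cons c a) b)
      = ∑ x : Bool × (Fin k → Bool), p.p (g - Sb (Fin.cons c a) (Fin.cons x.1 x.2)) :=
    (Fintype.sum_equiv (Fin.consEquiv (fun _ => Bool)) _ _ (fun x => rfl)).symm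
  rw [he, Fintype.sum_prod_type, Fintype.sum_bool]
  have h1 : ∀ t : Fin k → Bool, g - Sb (Fin.cons c a) (Fin.cons true t) = g - c - Sb a t := by
    intro t; rw [Sb_cons]; simp [sub_add_eq_sub_sub]
  have h2 : ∀ t : Fin k → Bool, g - Sb (Fin.cons c a) (Fin.cons false t) = g - Sb a t := by
    intro t; rw [Sb_cons]; simp
  simp only [h1, h2]
  rw [pow_succ]
  field_simp
  ring

lemma sum_Ff (p : FinProb G) {k : ℕ} (a : Fin k → G) : ∑ g, Ff p a g = 1 := by
  unfold Ff
  rw [← Finset.sum_div, Finset.sum_comm]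
  have : ∀ b : Fin k → Bool, ∑ g, p.p (g - Sb a b) = 1 := by
    intro b
    rw [← p.sum_one]
    exact Fintype.sum_equiv (Equiv.subRight (Sb a b)) _ _ (fun g => rfl)
  rw [Finset.sum_congr rfl (fun b _ => this b), Finset.sum_const, Finset.card_univ]
  simp [Fintype.card_fun]

lemma Ff_nonneg (p : FinProb G) {k : ℕ} (a : Fin k → G) (g : G) : 0 ≤ Ff p a g :=
  div_nonneg (Finset.sum_nonneg fun b _ => p.nonneg _) (by positivity)

/-- choose a shift with nonpositive autocorrelation -/
lemma exists_shift (f : G → ℝ) (hf : ∑ g, f g = 0) :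
    ∃ c : G, ∑ g, f g * f (g - c) ≤ 0 := by
  have htot : ∑ c, ∑ g, f g * f (g - c) = 0 := by
    rw [Finset.sum_comm]
    have : ∀ g, ∑ c, f g * f (g - c) = 0 := by
      intro g
      rw [← Finset.mul_sum]
      have : ∑ c, f (g - c) = ∑ x, f x :=
        Fintype.sum_equiv (Equiv.subLeft g) _ _ (fun c => rfl)
      rw [this, hf, mul_zero]
    simp [this]
  have hne : (Finset.univ : Finset G).Nonempty := Finset.univ_nonempty
  obtain ⟨c, _, hc⟩ := Finset.exists_le_of_sum_le hne
    (by rw [htot, Finset.sum_const_zero] :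
      ∑ c : G, ∑ g, f g * f (g - c) ≤ ∑ _c : G, (0:ℝ))
  exact ⟨c, hc⟩

lemma l2_induction (p : FinProb G) (u : ℝ) (hu : ∑ g : G, u = 1) (k : ℕ) :
    ∃ a : Fin k → G, ∑ g, (Ff p a g - u) ^ 2 ≤ (1/2) ^ k * ∑ g, (p.p g - u) ^ 2 := by
  induction k with
  | zero =>
    refine ⟨Fin.elim0, le_of_eq ?_⟩
    have : ∀ g, Ff p (Fin.elim0 : Fin 0 → G) g = p.p g := by
      intro g
      unfold Ff
      rw [Fintype.sum_subsingleton _ (fun _ : Fin 0 => true)]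
      simp [Sb]
    simp [this]
  | succ k ih =>
    obtain ⟨a, ha⟩ := ih
    set f : G → ℝ := fun g => Ff p a g - u with hfdef
    have hfs : ∑ g, f g = 0 := by
      rw [Finset.sum_sub_distrib, sum_Ff, hu, sub_self]
    obtain ⟨c, hc⟩ := exists_shift f hfs
    refine ⟨Fin.cons c a, ?_⟩
    have hrw : ∀ g, Ff p (Fin.cons c a) g - u = (f g + f (g - c)) / 2 := by
      intro g; rw [Ff_cons]; simp only [hfdef]; ring
    have hshift : ∑ g, f (g - c) ^ 2 = ∑ g, f g ^ 2 :=
      Fintype.sum_equiv (Equiv.subRight c) _ _ (fun g => rfl)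
    calc ∑ g, (Ff p (Fin.cons c a) g - u) ^ 2
        = ∑ g, ((f g)^2/4 + (f (g-c))^2/4 + (f g * f (g-c))/2) := by
          refine Finset.sum_congr rfl fun g _ => ?_; rw [hrw]; ring
      _ = (∑ g, f g ^ 2)/4 + (∑ g, f (g-c) ^ 2)/4 + (∑ g, f g * f (g-c))/2 := by
          rw [Finset.sum_add_distrib, Finset.sum_add_distrib, ← Finset.sum_div,
            ← Finset.sum_div, ← Finset.sum_div]
      _ ≤ (∑ g, f g ^ 2)/4 + (∑ g, f g ^ 2)/4 + 0 := by
          rw [hshift]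
          have : (∑ g, f g * f (g-c))/2 ≤ 0 := by linarith
          linarith
      _ = (1/2) * ∑ g, f g ^ 2 := by ring
      _ ≤ (1/2) * ((1/2) ^ k * ∑ g, (p.p g - u) ^ 2) := by
          have : ∑ g, f g ^ 2 = ∑ g, (Ff p a g - u)^2 := rfl
          rw [this]; linarith
      _ = (1/2) ^ (k+1) * ∑ g, (p.p g - u) ^ 2 := by ring

end Flatten

/-- L² flattening lemma: for a probability distribution `p` on a finite
group `G` and every `k ≥ 1` there is a distribution `p_k` with transport distance
`D(p, p_k) ≤ k·log 2` and `‖p_k − p_U‖₂ ≤ 2^{−k/2}·‖p − p_U‖₂`, where `p_U` is uniform. -/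


theorem l2_flattening {G : Type*} [Fintype G] [AddCommGroup G]
    (p : FinProb G) (k : ℕ) (hk : 1 ≤ k) :
    ∃ pk : FinProb G,
      transDist p id pk id ≤ (k : ℝ) * Real.log 2 ∧
      Real.sqrt (∑ x, (pk.p x - ((Fintype.card G : ℝ))⁻¹) ^ 2) ≤
        (2 : ℝ) ^ (-(k : ℝ) / 2) *
          Real.sqrt (∑ x, (p.p x - ((Fintype.card G : ℝ))⁻¹) ^ 2) := by
  classical
  set u : ℝ := ((Fintype.card G : ℝ))⁻¹ with hudef
  have hcard : (0:ℝ) < (Fintype.card G : ℝ) := by exact_mod_cast Fintype.card_pos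
  have hu : ∑ _g : G, u = 1 := by
    rw [Finset.sum_const, Finset.card_univ, nsmul_eq_mul, hudef, mul_inv_cancel₀ hcard.ne']
  obtain ⟨a, ha⟩ := l2_induction p u hu k
  refine ⟨⟨Ff p a, Ff_nonneg p a, sum_Ff p a⟩, ?_, ?_⟩
  · -- transport distance bound
    -- coupling on Ω = G × (Fin k → Bool)
    set Ω := G × (Fin k → Bool) with hΩ
    have h2k : (0:ℝ) < 2 ^ k := by positivity
    set μc : FinProb Ω := ⟨fun ω => p.p ω.1 / 2 ^ k,
      fun ω => div_nonneg (p.nonneg _) h2k.le, by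
        rw [Fintype.sum_prod_type]
        have hx : ∀ x : G, ∑ _b : Fin k → Bool, p.p x / 2 ^ k = p.p x := by
          intro x
          rw [Finset.sum_const, Finset.card_univ, nsmul_eq_mul]
          simp only [Fintype.card_fun, Fintype.card_bool, Fintype.card_fin]
          push_cast
          field_simp
        rw [Finset.sum_congr rfl (fun x _ => hx x), p.sum_one]⟩ with hμc
    set n := Fintype.card Ω with hn
    set e : Ω ≃ Fin n := Fintype.equivFin Ω with he
    set μ'' : FinProb (Fin n) := ⟨μc.p ∘ e.symm, fun i => μc.nonneg _, by
      rw [← μc.sum_one]; exact Fintype.sum_equiv e.symm _ _ (fun i => rfl)⟩ with hμ''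
    have hprob : ∀ (W : Ω → G) (s : G), prob μ'' (W ∘ e.symm) s = prob μc W s :=
      fun W s => Fintype.sum_equiv e.symm _ _ (fun i => rfl)
    set X'' : Fin n → G := (fun ω : Ω => ω.1) ∘ e.symm with hX''
    set Z'' : Fin n → G := (fun ω : Ω => Sb a ω.2) ∘ e.symm with hZ''
    have hXc : ∀ s, prob μc (fun ω : Ω => ω.1) s = p.p s := by
      intro s
      unfold prob
      rw [Fintype.sum_prod_type]
      have : ∀ x : G, (∑ b : Fin k → Bool, if x = s then p.p x / 2^k else 0)
          = if x = s then p.p x else 0 := by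
        intro x
        rw [Finset.sum_const, Finset.card_univ, nsmul_eq_mul]
        simp [Fintype.card_fun]
        split <;> field_simp
      rw [Finset.sum_congr rfl (fun x _ => this x),
        Finset.sum_ite_eq' Finset.univ s p.p, if_pos (Finset.mem_univ _)]
    have hYc : ∀ s, prob μc (fun ω : Ω => ω.1 + Sb a ω.2) s = Ff p a s := by
      intro s
      unfold prob Ff
      rw [Fintype.sum_prod_type, Finset.sum_comm]
      rw [Finset.sum_div]
      refine Finset.sum_congr rfl fun b _ => ?_
      have : ∀ x : G, (if x + Sb a b = s then p.p x / 2^k else 0)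
          = if x = s - Sb a b then p.p x / 2^k else 0 := by
        intro x
        congr 1
        simp [eq_sub_iff_add_eq]
      rw [Finset.sum_congr rfl (fun x _ => this x),
        Finset.sum_ite_eq' Finset.univ (s - Sb a b) (fun x => p.p x / 2^k),
        if_pos (Finset.mem_univ _)]
    have hbdd : BddBelow {h : ℝ | ∃ (m : ℕ) (μ' : FinProb (Fin m)) (X' Z : Fin m → G),
        (∀ s, prob μ' X' s = prob p id s) ∧
        (∀ s, prob μ' (fun ω => X' ω + Z ω) s = prob ⟨Ff p a, Ff_nonneg p a, sum_Ff p a⟩ id s)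
        ∧ entropy μ' Z = h} := by
      refine ⟨0, fun h hh => ?_⟩
      obtain ⟨m, μ', X', Z, _, _, hZ⟩ := hh
      rw [← hZ]
      exact entropy_nonneg μ' Z
    have hmem : entropy μ'' Z'' ∈ {h : ℝ | ∃ (m : ℕ) (μ' : FinProb (Fin m)) (X' Z : Fin m → G),
        (∀ s, prob μ' X' s = prob p id s) ∧
        (∀ s, prob μ' (fun ω => X' ω + Z ω) s = prob ⟨Ff p a, Ff_nonneg p a, sum_Ff p a⟩ id s)
        ∧ entropy μ' Z = h} := by
      refine ⟨n, μ'', X'', Z'', fun s => ?_, fun s => ?_, rfl⟩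
      · rw [prob_id, hX'', hprob, hXc]
      · rw [prob_id]
        have : (fun i => X'' i + Z'' i) = (fun ω : Ω => ω.1 + Sb a ω.2) ∘ e.symm := rfl
        rw [this, hprob, hYc]
    have hent : entropy μ'' Z'' ≤ (k : ℝ) * Real.log 2 := by
      have hΩne : Nonempty Ω := ⟨(0, fun _ => true)⟩
      have hnpos : 0 < n := Fintype.card_pos
      haveI hne : Nonempty (Fin n) := ⟨⟨0, hnpos⟩⟩
      have h1 := entropy_le_log_card μ'' Z''
      have hsub : Finset.univ.image Z'' ⊆ Finset.univ.image (Sb a) := by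
        intro s hs
        obtain ⟨i, _, hi⟩ := Finset.mem_image.mp hs
        exact Finset.mem_image.mpr ⟨(e.symm i).2, Finset.mem_univ _, hi⟩
      have hc1 : (Finset.univ.image Z'').card ≤ 2 ^ k := by
        calc (Finset.univ.image Z'').card ≤ (Finset.univ.image (Sb a)).card :=
              Finset.card_le_card hsub
          _ ≤ (Finset.univ : Finset (Fin k → Bool)).card := Finset.card_image_le
          _ = 2 ^ k := by simp [Fintype.card_fun]
      have hpos : 0 < (Finset.univ.image Z'').card := Finset.card_pos.mpr
        ⟨Z'' (Classical.arbitrary _), Finset.mem_image_of_mem _ (Finset.mem_univ _)⟩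
      calc entropy μ'' Z'' ≤ Real.log ((Finset.univ.image Z'').card) := h1
        _ ≤ Real.log ((2:ℝ) ^ k) := by
            apply Real.log_le_log (by exact_mod_cast hpos)
            exact_mod_cast hc1
        _ = (k : ℝ) * Real.log 2 := by rw [Real.log_pow]
    exact le_trans (csInf_le hbdd hmem) hent
  · -- L2 bound
    have hsq : Real.sqrt (∑ x, (Ff p a x - u) ^ 2)
        ≤ Real.sqrt ((1/2) ^ k * ∑ x, (p.p x - u) ^ 2) :=
      Real.sqrt_le_sqrt ha
    have hfac : Real.sqrt ((1/2:ℝ) ^ k) = (2 : ℝ) ^ (-(k : ℝ) / 2) := by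
      have h1 : ((1/2:ℝ)) ^ k = (2:ℝ) ^ (-(k:ℝ)) := by
        rw [Real.rpow_neg (by norm_num), Real.rpow_natCast, ← inv_pow, one_div]
      rw [h1, Real.sqrt_eq_rpow, ← Real.rpow_mul (by norm_num : (0:ℝ) ≤ 2)]
      congr 1
      ring
    calc Real.sqrt (∑ x, (Ff p a x - u) ^ 2)
        ≤ Real.sqrt ((1/2) ^ k * ∑ x, (p.p x - u) ^ 2) := hsq
      _ = Real.sqrt ((1/2:ℝ) ^ k) * Real.sqrt (∑ x, (p.p x - u) ^ 2) :=
          Real.sqrt_mul (by positivity) _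
      _ = (2 : ℝ) ^ (-(k : ℝ) / 2) * Real.sqrt (∑ x, (p.p x - u) ^ 2) := by rw [hfac]
end

section
/- For x, y > 0, F(x) + F'(x)(y−x) − F(y) = y·log⁺(y/x) + O(x) + O(y), where the implied constants are absolute; here F(x) = x log(1/x), F'(x) = log(1/x) − 1, and log⁺ t = max(log t, 0). In particular the left-hand side is nonnegative. -/
open Real
open scoped BigOperators Pointwise Classical

/-- for `x, y > 0`, the tangent-line defect
`F(x) + F'(x)(y−x) − F(y)` (with `F(x) = x·log(1/x)`, `F'(x) = log(1/x) − 1`) is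
nonnegative and equals `y·log⁺(y/x)` up to an error of at most `x + y`. -/
theorem tangent_defect_estimate {x y : ℝ} (hx : 0 < x) (hy : 0 < y) :
    0 ≤ Real.negMulLog x + (Real.log (1 / x) - 1) * (y - x) - Real.negMulLog y ∧
    |Real.negMulLog x + (Real.log (1 / x) - 1) * (y - x) - Real.negMulLog y
        - y * max (Real.log (y / x)) 0| ≤ x + y := by
  have key : Real.negMulLog x + (Real.log (1 / x) - 1) * (y - x) - Real.negMulLog y
      = y * Real.log (y / x) + x - y := by
    simp [Real.negMulLog, Real.log_div hy.ne' hx.ne', one_div, Real.log_inv]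
    ring
  have h2 : Real.log (x / y) = - Real.log (y / x) := by
    rw [← Real.log_inv]; congr 1; field_simp
  have h1 : Real.log (x / y) ≤ x / y - 1 := Real.log_le_sub_one_of_pos (by positivity)
  have h3 : y * Real.log (x / y) ≤ x - y := by
    calc y * Real.log (x / y) ≤ y * (x / y - 1) := by
          exact mul_le_mul_of_nonneg_left h1 hy.le
      _ = x - y := by field_simp
  have hnn : 0 ≤ y * Real.log (y / x) + x - y := by nlinarith [h3, h2]
  constructor
  · rw [key]; exact hnn
  · rw [key]
    rcases le_or_gt 0 (Real.log (y / x)) with h | h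
    · rw [max_eq_left h]
      have he : y * Real.log (y / x) + x - y - y * Real.log (y / x) = x - y := by ring
      rw [he, abs_le]
      constructor <;> linarith
    · rw [max_eq_right h.le, mul_zero, sub_zero, abs_le]
      have hle : y * Real.log (y / x) ≤ 0 :=
        mul_nonpos_of_nonneg_of_nonpos hy.le h.le
      constructor <;> linarith
end
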